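/- For k ≥ 4, the tournament G_1^{(k)} on vertex set {1,...,2k+1}, with i → j whenever 1 ≤ i < j ≤ 2k, and i → 2k+1 iff i ≥ k+1 (and 2k+1 → i iff i ≤ k), has at least k−2 pairwise non-isomorphic induced subtournaments on k vertices. -/
import Mathlib

open Finset

def G1 (k : ℕ) (a b : Fin (2 * k + 1)) : Prop :=
  if (b : ℕ) = 2 * k then k ≤ (a : ℕ) ∧ (a : ℕ) < 2 * k
  else if (a : ℕ) = 2 * k then (b : ℕ) < k
  else (a : ℕ) < (b : ℕ)

instance G1.decRel (k : ℕ) : DecidableRel (G1 k) := fun a b => by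
  unfold G1; infer_instance

section Invariants

variable {α β : Type*} [Fintype α] [Fintype β]

/-- out-degree -/
def tdeg (R : α → α → Prop) [DecidableRel R] (v : α) : ℕ :=
  Fintype.card {u : α // R v u}

/-- number of (ordered) 3-cycles through `v` -/
def tcyc (R : α → α → Prop) [DecidableRel R] (v : α) : ℕ :=
  Fintype.card {p : α × α // R v p.1 ∧ R p.1 p.2 ∧ R p.2 v}

def invC (R : α → α → Prop) [DecidableRel R] : ℕ := ∑ v, tcyc R v

def invB (R : α → α → Prop) [DecidableRel R] : ℕ := ∑ v, tdeg R v * (tcyc R v) ^ 2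

lemma tdeg_congr (R : α → α → Prop) [DecidableRel R] (S : β → β → Prop) [DecidableRel S]
    (e : α ≃ β) (h : ∀ x y, R x y ↔ S (e x) (e y)) (v : α) : tdeg R v = tdeg S (e v) :=
  Fintype.card_congr (e.subtypeEquiv fun u => h v u)

lemma tcyc_congr (R : α → α → Prop) [DecidableRel R] (S : β → β → Prop) [DecidableRel S]
    (e : α ≃ β) (h : ∀ x y, R x y ↔ S (e x) (e y)) (v : α) : tcyc R v = tcyc S (e v) :=
  Fintype.card_congr ((e.prodCongr e).subtypeEquiv fun p => by
    simp only [Equiv.prodCongr_apply, Prod.map_fst, Prod.map_snd]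
    exact and_congr (h v p.1) (and_congr (h p.1 p.2) (h p.2 v)))

lemma invC_congr (R : α → α → Prop) [DecidableRel R] (S : β → β → Prop) [DecidableRel S]
    (e : α ≃ β) (h : ∀ x y, R x y ↔ S (e x) (e y)) : invC R = invC S := by
  unfold invC
  rw [← Equiv.sum_comp e (fun w => tcyc S w)]
  exact Finset.sum_congr rfl fun v _ => tcyc_congr R S e h v

lemma invB_congr (R : α → α → Prop) [DecidableRel R] (S : β → β → Prop) [DecidableRel S]
    (e : α ≃ β) (h : ∀ x y, R x y ↔ S (e x) (e y)) : invB R = invB S := by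
  unfold invB
  rw [← Equiv.sum_comp e (fun w => tdeg S w * (tcyc S w) ^ 2)]
  exact Finset.sum_congr rfl fun v _ => by
    rw [tdeg_congr R S e h v, tcyc_congr R S e h v]

end Invariants

/-- Model tournament on `Fin k`: vertices `0..k-2` linearly ordered, vertex
`k-1` ("w") beaten by vertices `≥ s`, beats vertices `< s`. -/
def Ms (k s : ℕ) (a b : Fin k) : Prop :=
  if (b : ℕ) = k - 1 then s ≤ (a : ℕ) ∧ (a : ℕ) < k - 1
  else if (a : ℕ) = k - 1 then (b : ℕ) < s
  else (a : ℕ) < (b : ℕ)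

instance Ms.decRel (k s : ℕ) : DecidableRel (Ms k s) := fun a b => by
  unfold Ms; infer_instance

/-- card of an interval subtype of `Fin n` -/
lemma card_subtype_Ico (n a b : ℕ) (hb : b ≤ n) :
    Fintype.card {u : Fin n // a ≤ (u : ℕ) ∧ (u : ℕ) < b} = b - a := by
  rcases le_or_gt a b with hab | hab
  · refine (Fintype.card_congr (?_ : _ ≃ Fin (b - a))).trans (Fintype.card_fin _)
    refine Equiv.mk (fun u => ⟨(u.1 : ℕ) - a, by have := u.2; omega⟩)
      (fun j => ⟨⟨a + (j : ℕ), by have := j.2; omega⟩, by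
        refine ⟨by simp, by simp; have := j.2; omega⟩⟩) ?_ ?_
    · rintro ⟨u, hu⟩
      apply Subtype.ext; apply Fin.ext; simp; omega
    · rintro ⟨j, hj⟩
      apply Fin.ext; simp
  · rw [Nat.sub_eq_zero_of_le (le_of_lt hab)]
    rw [Fintype.card_eq_zero_iff]
    constructor; rintro ⟨u, h1, h2⟩; omega

lemma card_subtype_lt (n b : ℕ) (hb : b ≤ n) :
    Fintype.card {u : Fin n // (u : ℕ) < b} = b := by
  have := card_subtype_Ico n 0 b hb
  rw [Nat.sub_zero] at this
  rw [← this]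
  exact Fintype.card_congr (Equiv.subtypeEquivRight (by intro x; omega))

lemma card_subtype_val_eq (n m : ℕ) (hm : m < n) :
    Fintype.card {u : Fin n // (u : ℕ) = m} = 1 := by
  have : ∀ u : Fin n, (u : ℕ) = m ↔ u = ⟨m, hm⟩ := by
    intro u; rw [Fin.ext_iff]
  rw [Fintype.card_congr (Equiv.subtypeEquivRight this), Fintype.card_subtype_eq]

section compute
variable {k s t : ℕ}

lemma tdeg_small (hk : k = s + t + 1) (v : Fin k) (hv : (v : ℕ) < s) :
    tdeg (Ms k s) v = s + t - 1 - (v : ℕ) := by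
  have hiff : ∀ u : Fin k, Ms k s v u ↔ ((v : ℕ) + 1 ≤ (u : ℕ) ∧ (u : ℕ) < s + t) := by
    intro u; have hu := u.2; have hvv := v.2; unfold Ms; split_ifs <;> omega
  rw [tdeg, Fintype.card_congr (Equiv.subtypeEquivRight hiff),
    card_subtype_Ico k _ _ (by omega)]
  omega

lemma tdeg_large (hk : k = s + t + 1) (v : Fin k) (hv1 : s ≤ (v : ℕ)) (hv2 : (v : ℕ) < s + t) :
    tdeg (Ms k s) v = s + t - (v : ℕ) := by
  have hiff : ∀ u : Fin k, Ms k s v u ↔ ((v : ℕ) + 1 ≤ (u : ℕ) ∧ (u : ℕ) < k) := by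
    intro u; have hu := u.2; have hvv := v.2; unfold Ms; split_ifs <;> omega
  rw [tdeg, Fintype.card_congr (Equiv.subtypeEquivRight hiff),
    card_subtype_Ico k _ _ (by omega)]
  omega

lemma tdeg_w (hk : k = s + t + 1) (v : Fin k) (hv : (v : ℕ) = s + t) :
    tdeg (Ms k s) v = s := by
  have hiff : ∀ u : Fin k, Ms k s v u ↔ ((u : ℕ) < s) := by
    intro u; have hu := u.2; have hvv := v.2; unfold Ms; split_ifs <;> omega
  rw [tdeg, Fintype.card_congr (Equiv.subtypeEquivRight hiff),
    card_subtype_lt k _ (by omega)]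

lemma tcyc_small (hk : k = s + t + 1) (v : Fin k) (hv : (v : ℕ) < s) :
    tcyc (Ms k s) v = t := by
  have hiff : ∀ p : Fin k × Fin k,
      (Ms k s v p.1 ∧ Ms k s p.1 p.2 ∧ Ms k s p.2 v) ↔
      ((fun a : Fin k => s ≤ (a : ℕ) ∧ (a : ℕ) < s + t) p.1 ∧
       (fun b : Fin k => (b : ℕ) = s + t) p.2) := by
    intro p
    have h1 := p.1.2; have h2 := p.2.2; have hvv := v.2
    simp only
    unfold Ms; split_ifs <;> omega
  rw [tcyc, Fintype.card_congr (Equiv.subtypeEquivRight hiff),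
    Fintype.card_congr (Equiv.subtypeProdEquivProd
      (p := fun a : Fin k => s ≤ (a : ℕ) ∧ (a : ℕ) < s + t)
      (q := fun b : Fin k => (b : ℕ) = s + t)),
    Fintype.card_prod, card_subtype_Ico k _ _ (by omega),
    card_subtype_val_eq k _ (by omega)]
  omega

lemma tcyc_large (hk : k = s + t + 1) (v : Fin k) (hv1 : s ≤ (v : ℕ)) (hv2 : (v : ℕ) < s + t) :
    tcyc (Ms k s) v = s := by
  have hiff : ∀ p : Fin k × Fin k,
      (Ms k s v p.1 ∧ Ms k s p.1 p.2 ∧ Ms k s p.2 v) ↔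
      ((fun a : Fin k => (a : ℕ) = s + t) p.1 ∧
       (fun b : Fin k => (b : ℕ) < s) p.2) := by
    intro p
    have h1 := p.1.2; have h2 := p.2.2; have hvv := v.2
    simp only
    unfold Ms; split_ifs <;> omega
  rw [tcyc, Fintype.card_congr (Equiv.subtypeEquivRight hiff),
    Fintype.card_congr (Equiv.subtypeProdEquivProd
      (p := fun a : Fin k => (a : ℕ) = s + t)
      (q := fun b : Fin k => (b : ℕ) < s)),
    Fintype.card_prod, card_subtype_val_eq k _ (by omega),
    card_subtype_lt k _ (by omega)]
  omega

lemma tcyc_w (hk : k = s + t + 1) (v : Fin k) (hv : (v : ℕ) = s + t) :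
    tcyc (Ms k s) v = s * t := by
  have hiff : ∀ p : Fin k × Fin k,
      (Ms k s v p.1 ∧ Ms k s p.1 p.2 ∧ Ms k s p.2 v) ↔
      ((fun a : Fin k => (a : ℕ) < s) p.1 ∧
       (fun b : Fin k => s ≤ (b : ℕ) ∧ (b : ℕ) < s + t) p.2) := by
    intro p
    have h1 := p.1.2; have h2 := p.2.2; have hvv := v.2
    simp only
    unfold Ms; split_ifs <;> omega
  rw [tcyc, Fintype.card_congr (Equiv.subtypeEquivRight hiff),
    Fintype.card_congr (Equiv.subtypeProdEquivProd
      (p := fun a : Fin k => (a : ℕ) < s)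
      (q := fun b : Fin k => s ≤ (b : ℕ) ∧ (b : ℕ) < s + t)),
    Fintype.card_prod, card_subtype_lt k _ (by omega),
    card_subtype_Ico k _ _ (by omega)]
  rw [Nat.add_sub_cancel_left]

end compute

-- BEGIN PART4
lemma sum_fin_split (k s t : ℕ) (hk : k = s + t + 1) (F : ℕ → ℕ) :
    ∑ v : Fin k, F v.val =
      (∑ n ∈ range s, F n) + (∑ n ∈ Finset.Ico s (s + t), F n) + F (s + t) := by
  rw [Fin.sum_univ_eq_sum_range, hk, Finset.sum_range_succ]
  congr 1
  rw [Finset.range_eq_Ico,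
    ← Finset.sum_Ico_consecutive F (Nat.zero_le s) (Nat.le_add_right s t),
    ← Finset.range_eq_Ico]

lemma sumA (s t : ℕ) : ∑ n ∈ range s, (s + t - 1 - n) = s * t + ∑ n ∈ range s, n := by
  have h1 : ∑ n ∈ range s, (s + t - 1 - n) = ∑ n ∈ range s, (t + (s - 1 - n)) :=
    Finset.sum_congr rfl fun n hn => by have := mem_range.mp hn; omega
  rw [h1, Finset.sum_add_distrib, Finset.sum_const, card_range, smul_eq_mul,
    Finset.sum_range_reflect (fun n => n) s]

lemma sumB (s t : ℕ) : ∑ n ∈ Finset.Ico s (s + t), (s + t - n) = t + ∑ n ∈ range t, n := by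
  rw [Finset.sum_Ico_eq_sum_range]
  have h0 : s + t - s = t := by omega
  rw [h0]
  have h1 : ∑ i ∈ range t, (s + t - (s + i)) = ∑ i ∈ range t, (t - i) :=
    Finset.sum_congr rfl fun n hn => by have := mem_range.mp hn; omega
  rw [h1, ← Finset.sum_range_reflect (fun j => t - j) t]
  have h2 : ∑ j ∈ range t, (t - (t - 1 - j)) = ∑ j ∈ range t, (j + 1) :=
    Finset.sum_congr rfl fun n hn => by have := mem_range.mp hn; omega
  rw [h2, Finset.sum_add_distrib, Finset.sum_const, card_range, smul_eq_mul, mul_one,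
    add_comm]

lemma gauss (n : ℕ) : ((∑ i ∈ range n, i : ℕ) : ℤ) * 2 = (n : ℤ) ^ 2 - n := by
  have h := Finset.sum_range_id_mul_two n
  rcases Nat.eq_zero_or_pos n with h0 | h0
  · subst h0; simp
  · have : ((∑ i ∈ range n, i) * 2 : ℕ) = (n * (n - 1) : ℕ) := h
    have := congrArg (fun x : ℕ => (x : ℤ)) this
    push_cast [Nat.cast_sub h0] at this
    push_cast
    linarith [this]

lemma invC_Ms (k s t : ℕ) (hk : k = s + t + 1) : invC (Ms k s) = 3 * s * t := by
  have hpt : ∀ v : Fin k, tcyc (Ms k s) v =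
      (fun n => if n < s then t else if n < s + t then s else s * t) v.val := by
    intro v; have hv := v.2
    by_cases h1 : (v : ℕ) < s
    · rw [tcyc_small hk v h1]; simp [h1]
    · by_cases h2 : (v : ℕ) < s + t
      · rw [tcyc_large hk v (by omega) h2]; simp [h1, h2]
      · rw [tcyc_w hk v (by omega)]; simp [h1, h2]
  unfold invC
  have key := sum_fin_split k s t hk (fun n => if n < s then t else if n < s + t then s else s * t)
  rw [(Finset.sum_congr rfl fun v _ => hpt v).trans key]
  have e1 : ∑ n ∈ range s, (if n < s then t else if n < s + t then s else s * t) =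
      ∑ n ∈ range s, t :=
    Finset.sum_congr rfl fun n hn => by have := mem_range.mp hn; simp [this]
  have e2 : ∑ n ∈ Finset.Ico s (s + t),
      (if n < s then t else if n < s + t then s else s * t) = ∑ n ∈ Finset.Ico s (s + t), s :=
    Finset.sum_congr rfl fun n hn => by
      have := Finset.mem_Ico.mp hn
      simp only [if_neg (by omega : ¬ n < s), if_pos this.2]
  rw [e1, e2, Finset.sum_const, Finset.sum_const, card_range, Nat.card_Ico, smul_eq_mul,
    smul_eq_mul]
  simp only [if_neg (lt_irrefl _)]
  have : ¬ (s + t < s) := by omega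
  rw [if_neg this]
  have h0 : s + t - s = t := by omega
  rw [h0]; ring

lemma invB_Ms (k s t : ℕ) (hk : k = s + t + 1) :
    (invB (Ms k s) : ℤ) * 2 =
      2 * (s : ℤ) ^ 3 * t ^ 2 + 2 * s * t ^ 3 + 2 * s ^ 2 * t ^ 2 + s ^ 2 * t - s * t ^ 2 := by
  have hpt : ∀ v : Fin k, tdeg (Ms k s) v * (tcyc (Ms k s) v) ^ 2 =
      (fun n => if n < s then (s + t - 1 - n) * t ^ 2 else if n < s + t then (s + t - n) * s ^ 2
        else s * (s * t) ^ 2) v.val := by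
    intro v; have hv := v.2
    by_cases h1 : (v : ℕ) < s
    · rw [tdeg_small hk v h1, tcyc_small hk v h1]; simp [h1]
    · by_cases h2 : (v : ℕ) < s + t
      · rw [tdeg_large hk v (by omega) h2, tcyc_large hk v (by omega) h2]; simp [h1, h2]
      · rw [tdeg_w hk v (by omega), tcyc_w hk v (by omega)]; simp [h1, h2]
  have hsum : invB (Ms k s) =
      (∑ n ∈ range s, (s + t - 1 - n)) * t ^ 2 +
      (∑ n ∈ Finset.Ico s (s + t), (s + t - n)) * s ^ 2 + s * (s * t) ^ 2 := by
    unfold invB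
    have key := sum_fin_split k s t hk (fun n => if n < s then (s + t - 1 - n) * t ^ 2
      else if n < s + t then (s + t - n) * s ^ 2 else s * (s * t) ^ 2)
    rw [(Finset.sum_congr rfl fun v _ => hpt v).trans key]
    have e1 : ∑ n ∈ range s, (if n < s then (s + t - 1 - n) * t ^ 2
        else if n < s + t then (s + t - n) * s ^ 2 else s * (s * t) ^ 2) =
        ∑ n ∈ range s, (s + t - 1 - n) * t ^ 2 :=
      Finset.sum_congr rfl fun n hn => by have := mem_range.mp hn; simp [this]
    have e2 : ∑ n ∈ Finset.Ico s (s + t), (if n < s then (s + t - 1 - n) * t ^ 2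
        else if n < s + t then (s + t - n) * s ^ 2 else s * (s * t) ^ 2) =
        ∑ n ∈ Finset.Ico s (s + t), (s + t - n) * s ^ 2 :=
      Finset.sum_congr rfl fun n hn => by
        have := Finset.mem_Ico.mp hn
        simp only [if_neg (by omega : ¬ n < s), if_pos this.2]
    rw [e1, e2, ← Finset.sum_mul, ← Finset.sum_mul]
    simp only [if_neg (lt_irrefl _), if_neg (by omega : ¬ (s + t < s))]
  rw [hsum, sumA, sumB]
  have g1 := gauss s
  have g2 := gauss t
  push_cast at g1 g2 ⊢
  linear_combination (t : ℤ) ^ 2 * g1 + (s : ℤ) ^ 2 * g2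

/-- final arithmetic: the invariant pair is injective -/
lemma invariants_distinct (k s s' : ℕ) (hk : 4 ≤ k) (hs : s + 3 ≤ k) (hs' : s' + 3 ≤ k)
    (hne : s ≠ s')
    (hC : invC (Ms k s) = invC (Ms k s'))
    (hB : invB (Ms k s) = invB (Ms k s')) : False := by
  set t := k - 1 - s with htdef
  set t' := k - 1 - s' with htdef'
  have hkt : k = s + t + 1 := by omega
  have hkt' : k = s' + t' + 1 := by omega
  rw [invC_Ms k s t hkt, invC_Ms k s' t' hkt'] at hC
  have hCz : (s : ℤ) * t = (s' : ℤ) * t' := by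
    have : (3 * s * t : ℕ) = (3 * s' * t' : ℕ) := hC
    have := congrArg (fun x : ℕ => (x : ℤ)) this
    push_cast at this; linarith
  -- from s*t = s'*t' and s+t = s'+t', s ≠ s': s' = t, t' = s
  have hsum : (s : ℤ) + t = (s' : ℤ) + t' := by push_cast; omega
  have hfac : ((s : ℤ) - s') * ((s : ℤ) + s' - (s + t : ℤ)) = 0 := by
    linear_combination (-1 : ℤ) * hCz + (s' : ℤ) * hsum
  have hne' : (s : ℤ) - s' ≠ 0 := by omega
  have hss' : (s : ℤ) + s' = (s : ℤ) + t := by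
    rcases mul_eq_zero.mp hfac with h | h
    · exact absurd h hne'
    · linarith
  have hs't : s' = t := by omega
  have ht's : t' = s := by omega
  -- now invB equality gives contradiction
  have hB1 := invB_Ms k s t hkt
  have hB2 := invB_Ms k s' t' hkt'
  rw [hB] at hB1
  rw [hB2] at hB1
  rw [hs't, ht's] at hB1
  -- hB1 : polynomial identity; derive contradiction
  have h2s : 2 ≤ s := by omega
  have h2t : 2 ≤ t := by omega
  have hzero : 2 * (s : ℤ) * t * ((s : ℤ) - t) * ((s : ℤ) - 1) * ((t : ℤ) - 1) = 0 := by
    linear_combination -hB1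
  have hs1 : (s : ℤ) - 1 ≠ 0 := by omega
  have ht1 : (t : ℤ) - 1 ≠ 0 := by omega
  have hsz : (s : ℤ) ≠ 0 := by omega
  have htz : (t : ℤ) ≠ 0 := by omega
  have hd : (s : ℤ) - t ≠ 0 := by
    intro h
    have : s = t := by omega
    omega
  exact (mul_ne_zero (mul_ne_zero (mul_ne_zero (mul_ne_zero (mul_ne_zero
    (two_ne_zero (α := ℤ)) hsz) htz) hd) hs1) ht1) hzero


/-- the embedding of the model into `G1` -/
def emb (k s : ℕ) (j : Fin k) : Fin (2 * k + 1) :=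
  ⟨if (j : ℕ) < s then (j : ℕ) else if (j : ℕ) < k - 1 then k + (j : ℕ) - s else 2 * k,
   by have := j.2; split_ifs <;> omega⟩

lemma emb_inj (k s : ℕ) (hs : s + 3 ≤ k) : Function.Injective (emb k s) := by
  intro a b h
  have ha := a.2; have hb := b.2
  have h' := congrArg Fin.val h
  simp only [emb] at h'
  apply Fin.ext
  split_ifs at h' <;> omega

lemma emb_rel (k s : ℕ) (hs : s + 3 ≤ k) (a b : Fin k) :
    Ms k s a b ↔ G1 k (emb k s a) (emb k s b) := by
  have ha := a.2; have hb := b.2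
  unfold Ms G1 emb
  simp only [Fin.val_mk]
  split_ifs <;> omega

/-- For `k ≥ 4`, the tournament `G₁⁽ᵏ⁾` has at least `k-2` pairwise
non-isomorphic induced subtournaments on `k` vertices. -/
theorem G1_many_subtournaments (k : ℕ) (hk : 4 ≤ k) :
    ∃ f : Fin (k - 2) → Finset (Fin (2 * k + 1)),
      (∀ i, (f i).card = k) ∧
      ∀ i j, i ≠ j →
        ¬ ∃ e : {x // x ∈ f i} ≃ {x // x ∈ f j},
          ∀ x y : {x // x ∈ f i}, G1 k x.1 y.1 ↔ G1 k (e x).1 (e y).1 := by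
  refine ⟨fun i => Finset.image (emb k i.val) Finset.univ, ?_, ?_⟩
  · intro i
    rw [Finset.card_image_of_injective _ (emb_inj k i.val (by have := i.2; omega)),
      Finset.card_univ, Fintype.card_fin]
  · rintro i j hne ⟨e, he⟩
    have hsi : (i : ℕ) + 3 ≤ k := by have := i.2; omega
    have hsj : (j : ℕ) + 3 ≤ k := by have := j.2; omega
    -- equivalences between the model and the induced subtournaments
    have mkE : ∀ (s : ℕ) (hs : s + 3 ≤ k),
        ∃ E : Fin k ≃ {x // x ∈ Finset.image (emb k s) Finset.univ},
          ∀ v : Fin k, (E v).1 = emb k s v := by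
      intro s hs
      have hinj := emb_inj k s hs
      refine ⟨Equiv.ofBijective
        (fun v => ⟨emb k s v, Finset.mem_image_of_mem _ (Finset.mem_univ v)⟩)
        ⟨fun a b h => hinj (congrArg Subtype.val h), ?_⟩, fun v => rfl⟩
      rintro ⟨x, hx⟩
      obtain ⟨v, -, rfl⟩ := Finset.mem_image.mp hx
      exact ⟨v, rfl⟩
    obtain ⟨Ei, hEi⟩ := mkE i.val hsi
    obtain ⟨Ej, hEj⟩ := mkE j.val hsj
    haveI d1 : DecidableRel (fun (x y : {x // x ∈ Finset.image (emb k (i : ℕ)) Finset.univ}) =>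
        G1 k x.1 y.1) := fun x y => G1.decRel k x.1 y.1
    haveI d2 : DecidableRel (fun (x y : {x // x ∈ Finset.image (emb k (j : ℕ)) Finset.univ}) =>
        G1 k x.1 y.1) := fun x y => G1.decRel k x.1 y.1
    have hreli : ∀ a b : Fin k, Ms k i.val a b ↔ G1 k (Ei a).1 (Ei b).1 := by
      intro a b; rw [hEi a, hEi b]; exact emb_rel k i.val hsi a b
    have hrelj : ∀ a b : Fin k, Ms k j.val a b ↔ G1 k (Ej a).1 (Ej b).1 := by
      intro a b; rw [hEj a, hEj b]; exact emb_rel k j.val hsj a b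
    have c1 : invC (Ms k i.val) =
        invC (fun (x y : {x // x ∈ Finset.image (emb k (i : ℕ)) Finset.univ}) => G1 k x.1 y.1) :=
      invC_congr _ _ Ei hreli
    have c2 : invC (fun (x y : {x // x ∈ Finset.image (emb k (i : ℕ)) Finset.univ}) =>
        G1 k x.1 y.1) =
        invC (fun (x y : {x // x ∈ Finset.image (emb k (j : ℕ)) Finset.univ}) => G1 k x.1 y.1) :=
      invC_congr _ _ e he
    have c3 : invC (Ms k j.val) =
        invC (fun (x y : {x // x ∈ Finset.image (emb k (j : ℕ)) Finset.univ}) => G1 k x.1 y.1) :=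
      invC_congr _ _ Ej hrelj
    have b1 : invB (Ms k i.val) =
        invB (fun (x y : {x // x ∈ Finset.image (emb k (i : ℕ)) Finset.univ}) => G1 k x.1 y.1) :=
      invB_congr _ _ Ei hreli
    have b2 : invB (fun (x y : {x // x ∈ Finset.image (emb k (i : ℕ)) Finset.univ}) =>
        G1 k x.1 y.1) =
        invB (fun (x y : {x // x ∈ Finset.image (emb k (j : ℕ)) Finset.univ}) => G1 k x.1 y.1) :=
      invB_congr _ _ e he
    have b3 : invB (Ms k j.val) =
        invB (fun (x y : {x // x ∈ Finset.image (emb k (j : ℕ)) Finset.univ}) => G1 k x.1 y.1) :=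
      invB_congr _ _ Ej hrelj
    exact invariants_distinct k i.val j.val hk hsi hsj
      (fun h => hne (Fin.ext h))
      (c1.trans (c2.trans c3.symm))
      (b1.trans (b2.trans b3.symm))
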